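/- Let Ω ⊂ R^2 be a bounded measurable set and let u: Ω → R be integrable with ∫_Ω |u| = m > 0. Suppose v: Ω → R satisfies v(x) ≤ (1/(2πd)) ∫_Ω ln(1/|x−y|)·|u(y)| dy + K m for all x ∈ Ω, where d, K > 0. If 0 < Λ < 4πd/m, then ∫_Ω exp(Λ v(x)) dx ≤ e^{ΛKm} · ∫_Ω (∫_Ω |x−y|^{−Λm/(2πd)} dx) · (|u(y)|/m) dy. -/

import Mathlib

open MeasureTheory Metric Set Real Filter
open scoped ENNReal

lemma aux_fin {c : ℝ} (hc0 : 0 < c) (hc2 : c < 2) (s : ℝ) :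
    ∫⁻ x : EuclideanSpace ℝ (Fin 2) in closedBall 0 s, ENNReal.ofReal (‖x‖ ^ (-c)) < ∞ := by
  set ν := (volume : Measure (EuclideanSpace ℝ (Fin 2))).restrict (closedBall 0 s) with hν
  have hmeas : AEMeasurable (fun x : EuclideanSpace ℝ (Fin 2) => ‖x‖ ^ (-c)) ν := by fun_prop
  rw [lintegral_eq_lintegral_meas_le _ (Eventually.of_forall fun x => rpow_nonneg (norm_nonneg _) _) hmeas]
  have hsub : ∀ t : ℝ, 0 < t →
      {a : EuclideanSpace ℝ (Fin 2) | t ≤ ‖a‖ ^ (-c)} ⊆ closedBall 0 (t ^ (-c⁻¹)) := by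
    intro t ht a ha
    simp only [mem_setOf_eq] at ha
    rcases eq_or_ne a 0 with rfl | h0
    · simp only [norm_zero] at ha
      rw [Real.zero_rpow (neg_ne_zero.2 hc0.ne')] at ha
      linarith
    · have hn : 0 < ‖a‖ := norm_pos_iff.2 h0
      rw [mem_closedBall_zero_iff]
      calc ‖a‖ = (‖a‖ ^ (-c)) ^ (-c⁻¹) := by
            rw [← Real.rpow_mul hn.le, neg_mul_neg, mul_inv_cancel₀ hc0.ne', Real.rpow_one]
        _ ≤ t ^ (-c⁻¹) := Real.rpow_le_rpow_of_nonpos ht ha (neg_nonpos.2 (by positivity))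
  calc ∫⁻ t in Ioi (0:ℝ), ν {a | t ≤ ‖a‖ ^ (-c)}
      ≤ ∫⁻ t in Ioc (0:ℝ) 1 ∪ Ioi 1, ν {a | t ≤ ‖a‖ ^ (-c)} :=
        lintegral_mono_set Ioi_subset_Ioc_union_Ioi
    _ ≤ (∫⁻ t in Ioc (0:ℝ) 1, ν {a | t ≤ ‖a‖ ^ (-c)}) + ∫⁻ t in Ioi 1, ν {a | t ≤ ‖a‖ ^ (-c)} :=
        lintegral_union_le _ _ _
    _ < ∞ := by
        refine ENNReal.add_lt_top.2 ⟨?_, ?_⟩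
        · calc ∫⁻ t in Ioc (0:ℝ) 1, ν {a | t ≤ ‖a‖ ^ (-c)}
              ≤ ∫⁻ _ in Ioc (0:ℝ) 1, ν univ := by
                refine lintegral_mono fun t => measure_mono (subset_univ _)
            _ = ν univ * volume (Ioc (0:ℝ) 1) := by rw [setLIntegral_const]
            _ < ∞ := by
                refine ENNReal.mul_lt_top ?_ (by simp)
                rw [hν, Measure.restrict_apply_univ]
                exact measure_closedBall_lt_top
        · have hbd : ∀ t ∈ Ioi (1:ℝ), ν {a | t ≤ ‖a‖ ^ (-c)} ≤
              ENNReal.ofReal (t ^ (-(2/c))) * volume (ball (0 : EuclideanSpace ℝ (Fin 2)) 1) := by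
            intro t ht
            have ht0 : (0:ℝ) < t := lt_trans one_pos ht
            calc ν {a | t ≤ ‖a‖ ^ (-c)}
                ≤ volume (closedBall (0 : EuclideanSpace ℝ (Fin 2)) (t ^ (-c⁻¹))) :=
                  le_trans (le_trans (Measure.restrict_le_self _) le_rfl)
                    (measure_mono (hsub t ht0))
              _ = ENNReal.ofReal ((t ^ (-c⁻¹)) ^ Module.finrank ℝ (EuclideanSpace ℝ (Fin 2))) *
                    volume (ball (0 : EuclideanSpace ℝ (Fin 2)) 1) :=
                  Measure.addHaar_closedBall _ _ (by positivity)
              _ = ENNReal.ofReal (t ^ (-(2/c))) * volume (ball (0 : EuclideanSpace ℝ (Fin 2)) 1) := by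
                  congr 2
                  rw [finrank_euclideanSpace, Fintype.card_fin]
                  rw [← Real.rpow_natCast (t ^ (-c⁻¹)) 2, ← Real.rpow_mul ht0.le]
                  congr 1
                  field_simp
                  norm_num
          calc ∫⁻ t in Ioi (1:ℝ), ν {a | t ≤ ‖a‖ ^ (-c)}
              ≤ ∫⁻ t in Ioi (1:ℝ), ENNReal.ofReal (t ^ (-(2/c))) *
                  volume (ball (0 : EuclideanSpace ℝ (Fin 2)) 1) :=
                setLIntegral_mono' measurableSet_Ioi hbd
            _ = (∫⁻ t in Ioi (1:ℝ), ENNReal.ofReal (t ^ (-(2/c)))) *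
                  volume (ball (0 : EuclideanSpace ℝ (Fin 2)) 1) := by
                rw [lintegral_mul_const' _ _ measure_ball_lt_top.ne]
            _ < ∞ := by
                refine ENNReal.mul_lt_top ?_ measure_ball_lt_top
                have hint : IntegrableOn (fun t : ℝ => t ^ (-(2/c))) (Ioi 1) := by
                  refine integrableOn_Ioi_rpow_of_lt ?_ one_pos
                  rw [neg_lt_neg_iff]
                  rw [lt_div_iff₀ hc0]
                  linarith
                exact hint.setLIntegral_lt_top

lemma aux_trans {c : ℝ} (y : EuclideanSpace ℝ (Fin 2)) (s : ℝ) :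
    ∫⁻ x : EuclideanSpace ℝ (Fin 2) in closedBall y s, ENNReal.ofReal (‖x - y‖ ^ (-c)) =
    ∫⁻ x : EuclideanSpace ℝ (Fin 2) in closedBall 0 s, ENNReal.ofReal (‖x‖ ^ (-c)) := by
  set g : EuclideanSpace ℝ (Fin 2) → ℝ≥0∞ :=
    (closedBall (0 : EuclideanSpace ℝ (Fin 2)) s).indicator (fun w => ENNReal.ofReal (‖w‖ ^ (-c)))
  have h1 : ∫⁻ x in closedBall y s, ENNReal.ofReal (‖x - y‖ ^ (-c)) = ∫⁻ x, g (x - y) := by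
    rw [← lintegral_indicator (measurableSet_closedBall)]
    congr 1
    ext x
    by_cases hx : x ∈ closedBall y s
    · have hx' : x - y ∈ closedBall (0 : EuclideanSpace ℝ (Fin 2)) s := by
        rw [mem_closedBall_zero_iff]; rw [mem_closedBall, dist_eq_norm] at hx; exact hx
      simp only [g]
      rw [indicator_of_mem hx, indicator_of_mem hx']
    · have hx' : x - y ∉ closedBall (0 : EuclideanSpace ℝ (Fin 2)) s := by
        rw [mem_closedBall_zero_iff]; rw [mem_closedBall, dist_eq_norm] at hx; exact hx
      simp only [g]
      rw [indicator_of_notMem hx, indicator_of_notMem hx']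
  rw [h1, lintegral_sub_right_eq_self g y, lintegral_indicator measurableSet_closedBall]

lemma aux_log {c r : ℝ} (hc : 0 < c) (hr : 0 ≤ r) :
    |Real.log (1 / r)| ≤ r + (1/c) * r ^ (-c) := by
  rcases eq_or_lt_of_le hr with rfl | hr0
  · simp [Real.zero_rpow (neg_ne_zero.2 hc.ne')]
  · rw [one_div, Real.log_inv, abs_neg]
    have h1 : Real.log r ≤ r := (Real.log_le_sub_one_of_pos hr0).trans (by linarith)
    have h2 : -Real.log r ≤ (1/c) * r ^ (-c) := by
      have h := Real.log_le_sub_one_of_pos (Real.rpow_pos_of_pos hr0 (-c))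
      rw [Real.log_rpow hr0] at h
      have h' : -c * Real.log r ≤ r ^ (-c) := by linarith
      calc -Real.log r = (1/c) * (-c * Real.log r) := by field_simp
        _ ≤ (1/c) * r ^ (-c) := mul_le_mul_of_nonneg_left h' (by positivity)
    have hrc : (0:ℝ) ≤ r ^ (-c) := (Real.rpow_pos_of_pos hr0 _).le
    rw [abs_le]
    constructor
    · nlinarith
    · nlinarith [mul_pos (by positivity : (0:ℝ) < 1/c) (Real.rpow_pos_of_pos hr0 (-c))]

theorem exp_integral_bound
    (Ω : Set (EuclideanSpace ℝ (Fin 2))) (hΩb : Bornology.IsBounded Ω)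
    (hΩm : MeasurableSet Ω)
    (u v : EuclideanSpace ℝ (Fin 2) → ℝ)
    (m d K Λ : ℝ) (hm : 0 < m) (hd : 0 < d) (hK : 0 < K)
    (hu : MeasureTheory.IntegrableOn u Ω)
    (hum : ∫ y in Ω, |u y| = m)
    (hv : ∀ x ∈ Ω, v x ≤
      (1 / (2 * Real.pi * d)) * (∫ y in Ω, Real.log (1 / ‖x - y‖) * |u y|) + K * m)
    (hΛ : 0 < Λ) (hΛ2 : Λ < 4 * Real.pi * d / m) :
    ∫ x in Ω, Real.exp (Λ * v x) ≤
      Real.exp (Λ * K * m) *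
        ∫ y in Ω, (∫ x in Ω, ‖x - y‖ ^ (-(Λ * m / (2 * Real.pi * d)))) * (|u y| / m) := by
  have hπ : (0:ℝ) < 2 * Real.pi * d := by positivity
  set c := Λ * m / (2 * Real.pi * d) with hc_def
  have hc0 : 0 < c := by positivity
  have hc2 : c < 2 := by
    rw [hc_def, div_lt_iff₀ hπ]
    have := (lt_div_iff₀ hm).1 hΛ2
    nlinarith
  -- bounded domain
  obtain ⟨R, hR⟩ := hΩb.subset_closedBall 0
  have hdist : ∀ x ∈ Ω, ∀ y ∈ Ω, ‖x - y‖ ≤ 2 * R := by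
    intro x hx y hy
    have h1 : ‖x‖ ≤ R := mem_closedBall_zero_iff.1 (hR hx)
    have h2 : ‖y‖ ≤ R := mem_closedBall_zero_iff.1 (hR hy)
    calc ‖x - y‖ ≤ ‖x‖ + ‖y‖ := norm_sub_le _ _
      _ ≤ 2 * R := by linarith
  set ν := (volume : Measure (EuclideanSpace ℝ (Fin 2))).restrict Ω with hν_def
  set w : EuclideanSpace ℝ (Fin 2) → ℝ := fun y => |u y| / m with hw_def
  have hw_nn : ∀ y, 0 ≤ w y := fun y => by positivity
  have hw_int : Integrable w ν := hu.abs.div_const m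
  have hw_asm : AEStronglyMeasurable w ν := hw_int.1
  have hw_one : ∫ y in Ω, w y = 1 := by
    simp only [hw_def]
    rw [integral_div, hum, div_self hm.ne']
  have hwm : AEMeasurable (fun y => Real.toNNReal (w y)) ν := hw_asm.aemeasurable.real_toNNReal
  set μ := ν.withDensity (fun y => ((w y).toNNReal : ℝ≥0∞)) with hμ_def
  have hprob : IsProbabilityMeasure μ := by
    constructor
    rw [hμ_def, withDensity_apply _ MeasurableSet.univ, Measure.restrict_univ]
    have h1 : ∫⁻ y, ((w y).toNNReal : ℝ≥0∞) ∂ν = ∫⁻ y, ENNReal.ofReal (w y) ∂ν := rfl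
    rw [h1, ← ofReal_integral_eq_lintegral_ofReal hw_int (Eventually.of_forall hw_nn), hw_one,
      ENNReal.ofReal_one]
  have hconv : ∀ f : EuclideanSpace ℝ (Fin 2) → ℝ, ∫ a, f a ∂μ = ∫ y in Ω, w y * f y := by
    intro f
    rw [hμ_def, integral_withDensity_eq_integral_smul₀ hwm f]
    refine integral_congr_ae (Eventually.of_forall fun y => ?_)
    simp [NNReal.smul_def, Real.coe_toNNReal _ (hw_nn y)]
  have hint_iff : ∀ f : EuclideanSpace ℝ (Fin 2) → ℝ,
      Integrable f μ ↔ Integrable (fun y => w y * f y) ν := by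
    intro f
    rw [hμ_def, integrable_withDensity_iff_integrable_smul₀ hwm]
    refine integrable_congr (Eventually.of_forall fun y => ?_)
    simp [NNReal.smul_def, Real.coe_toNNReal _ (hw_nn y)]
  -- kernel measurability
  have hk_meas : Measurable (fun p : EuclideanSpace ℝ (Fin 2) × EuclideanSpace ℝ (Fin 2) =>
      ‖p.1 - p.2‖ ^ (-c)) := by fun_prop
  have hF_asm : AEStronglyMeasurable
      (fun p : EuclideanSpace ℝ (Fin 2) × EuclideanSpace ℝ (Fin 2) =>
        ‖p.1 - p.2‖ ^ (-c) * w p.2) (ν.prod ν) :=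
    hk_meas.aestronglyMeasurable.mul (hw_asm.comp_snd)
  -- Tonelli finiteness
  have hJ : ∫⁻ x : EuclideanSpace ℝ (Fin 2) in closedBall 0 (2*R),
      ENNReal.ofReal (‖x‖ ^ (-c)) < ∞ := aux_fin hc0 hc2 _
  set J := ∫⁻ x : EuclideanSpace ℝ (Fin 2) in closedBall 0 (2*R),
      ENNReal.ofReal (‖x‖ ^ (-c)) with hJ_def
  have hbound : ∀ y ∈ Ω, ∫⁻ x in Ω, ENNReal.ofReal (‖x - y‖ ^ (-c)) ≤ J := by
    intro y hy
    calc ∫⁻ x in Ω, ENNReal.ofReal (‖x - y‖ ^ (-c))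
        ≤ ∫⁻ x in closedBall y (2*R), ENNReal.ofReal (‖x - y‖ ^ (-c)) := by
          refine lintegral_mono_set fun x hx => ?_
          rw [mem_closedBall, dist_eq_norm]
          exact hdist x hx y hy
      _ = J := aux_trans y (2*R)
  have hprod_fin : ∫⁻ p, ENNReal.ofReal (‖p.1 - p.2‖ ^ (-c) * w p.2) ∂(ν.prod ν) < ∞ := by
    have hFm : AEMeasurable
        (fun p : EuclideanSpace ℝ (Fin 2) × EuclideanSpace ℝ (Fin 2) =>
          ENNReal.ofReal (‖p.1 - p.2‖ ^ (-c) * w p.2)) (ν.prod ν) :=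
      (hF_asm.aemeasurable).ennreal_ofReal
    rw [lintegral_prod_symm _ hFm]
    have hle : ∫⁻ y, ∫⁻ x, ENNReal.ofReal (‖x - y‖ ^ (-c) * w y) ∂ν ∂ν ≤
        ∫⁻ y, J * ENNReal.ofReal (w y) ∂ν := by
      refine lintegral_mono_ae ?_
      filter_upwards [ae_restrict_mem hΩm] with y hy
      calc ∫⁻ x, ENNReal.ofReal (‖x - y‖ ^ (-c) * w y) ∂ν
          = (∫⁻ x, ENNReal.ofReal (‖x - y‖ ^ (-c)) ∂ν) * ENNReal.ofReal (w y) := by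
            rw [← lintegral_mul_const' _ _ ENNReal.ofReal_ne_top]
            congr 1
            ext x
            rw [ENNReal.ofReal_mul (rpow_nonneg (norm_nonneg _) _)]
        _ ≤ J * ENNReal.ofReal (w y) := by
            gcongr
            exact hbound y hy
    refine lt_of_le_of_lt hle ?_
    rw [lintegral_const_mul' _ _ hJ.ne]
    refine ENNReal.mul_lt_top hJ ?_
    rw [← ofReal_integral_eq_lintegral_ofReal hw_int (Eventually.of_forall hw_nn), hw_one]
    simp
  -- a.e. integrability of the kernel against w
  have h_good : ∀ᵐ x ∂ν, IntegrableOn (fun y => ‖x - y‖ ^ (-c) * w y) Ω := by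
    have hFm : AEMeasurable
        (fun p : EuclideanSpace ℝ (Fin 2) × EuclideanSpace ℝ (Fin 2) =>
          ENNReal.ofReal (‖p.1 - p.2‖ ^ (-c) * w p.2)) (ν.prod ν) :=
      (hF_asm.aemeasurable).ennreal_ofReal
    obtain ⟨G, hGm, hFG⟩ := hFm
    have h1' : ∫⁻ x, ∫⁻ y, G (x, y) ∂ν ∂ν < ∞ := by
      rw [← lintegral_prod _ hGm.aemeasurable, ← lintegral_congr_ae hFG]
      exact hprod_fin
    have h2' := ae_lt_top hGm.lintegral_prod_right' h1'.ne
    have h3 := Measure.ae_ae_of_ae_prod hFG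
    have h2 : ∀ᵐ x ∂ν, ∫⁻ y, ENNReal.ofReal (‖x - y‖ ^ (-c) * w y) ∂ν < ∞ := by
      filter_upwards [h2', h3] with x hx1 hx2
      rw [lintegral_congr_ae hx2]
      exact hx1
    filter_upwards [h2] with x hx
    have hkx : Measurable (fun y : EuclideanSpace ℝ (Fin 2) => ‖x - y‖ ^ (-c)) := by fun_prop
    refine ⟨hkx.aestronglyMeasurable.mul hw_asm, ?_⟩
    rw [hasFiniteIntegral_iff_ofReal
      (Eventually.of_forall fun y => mul_nonneg (rpow_nonneg (norm_nonneg _) _) (hw_nn y))]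
    exact hx
  -- the comparison function
  set G : EuclideanSpace ℝ (Fin 2) → ℝ := fun x => ∫ y in Ω, ‖x - y‖ ^ (-c) * w y with hG_def
  have hFm : AEMeasurable
      (fun p : EuclideanSpace ℝ (Fin 2) × EuclideanSpace ℝ (Fin 2) =>
        ENNReal.ofReal (‖p.1 - p.2‖ ^ (-c) * w p.2)) (ν.prod ν) :=
    (hF_asm.aemeasurable).ennreal_ofReal
  -- pointwise Jensen bound
  have key : ∀ᵐ x ∂ν, Real.exp (Λ * v x) ≤ Real.exp (Λ * K * m) * G x := by
    filter_upwards [h_good, ae_restrict_mem hΩm] with x hx hxΩ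
    set φ : EuclideanSpace ℝ (Fin 2) → ℝ := fun y => c * Real.log (1 / ‖x - y‖) with hφ_def
    have hmlog : Measurable (fun y : EuclideanSpace ℝ (Fin 2) => Real.log (1 / ‖x - y‖)) :=
      Real.measurable_log.comp (measurable_const.div ((measurable_const.sub measurable_id).norm))
    have hlog : Integrable (fun y => Real.log (1 / ‖x - y‖) * w y) ν := by
      refine Integrable.mono' (g := fun y => (2*R) * w y + (1/c) * (‖x - y‖ ^ (-c) * w y))
        ((hw_int.const_mul _).add (hx.const_mul _)) ?_ ?_
      · exact hmlog.aestronglyMeasurable.mul hw_asm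
      · filter_upwards [ae_restrict_mem hΩm] with y hy
        have h1 : |Real.log (1 / ‖x - y‖)| ≤ ‖x - y‖ + (1/c) * ‖x - y‖ ^ (-c) :=
          aux_log hc0 (norm_nonneg _)
        have h2 : ‖x - y‖ ≤ 2*R := hdist x hxΩ y hy
        calc ‖Real.log (1 / ‖x - y‖) * w y‖ = |Real.log (1 / ‖x - y‖)| * w y := by
              rw [norm_mul, Real.norm_eq_abs, Real.norm_eq_abs, abs_of_nonneg (hw_nn y)]
          _ ≤ (‖x - y‖ + (1/c) * ‖x - y‖ ^ (-c)) * w y :=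
              mul_le_mul_of_nonneg_right h1 (hw_nn y)
          _ ≤ (2*R + (1/c) * ‖x - y‖ ^ (-c)) * w y := by
              refine mul_le_mul_of_nonneg_right (by linarith) (hw_nn y)
          _ = 2*R * w y + 1/c * (‖x - y‖ ^ (-c) * w y) := by ring
    have hφμ : Integrable φ μ := by
      rw [hint_iff]
      have heq : (fun y => w y * φ y) = fun y => c * (Real.log (1 / ‖x - y‖) * w y) :=
        funext fun y => by simp only [hφ_def]; ring
      rw [heq]
      exact hlog.const_mul c
    have hexp_eq : ∀ y : EuclideanSpace ℝ (Fin 2), x - y ≠ 0 →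
        Real.exp (φ y) = ‖x - y‖ ^ (-c) := by
      intro y hne
      have hr : 0 < ‖x - y‖ := norm_pos_iff.2 hne
      rw [Real.rpow_def_of_pos hr]
      congr 1
      rw [hφ_def]
      simp only [one_div, Real.log_inv]
      ring
    have hexp_le : ∀ y : EuclideanSpace ℝ (Fin 2), Real.exp (φ y) ≤ ‖x - y‖ ^ (-c) + 1 := by
      intro y
      rcases eq_or_ne (x - y) 0 with h0 | h0
      · have : ‖x - y‖ = 0 := by rw [h0, norm_zero]
        simp only [hφ_def, this, Real.zero_rpow (neg_ne_zero.2 hc0.ne'), div_zero,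
          Real.log_zero, mul_zero, Real.exp_zero, zero_add, le_refl]
      · rw [hexp_eq y h0]
        linarith
    have hexpφμ : Integrable (fun y => Real.exp (φ y)) μ := by
      rw [hint_iff]
      refine Integrable.mono' (g := fun y => ‖x - y‖ ^ (-c) * w y + w y) (hx.add hw_int)
        (hw_asm.mul (Real.measurable_exp.comp (hmlog.const_mul c)).aestronglyMeasurable) ?_
      refine Eventually.of_forall fun y => ?_
      rw [Real.norm_eq_abs, abs_of_nonneg (mul_nonneg (hw_nn y) (Real.exp_nonneg _))]
      calc w y * Real.exp (φ y) ≤ w y * (‖x - y‖ ^ (-c) + 1) :=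
            mul_le_mul_of_nonneg_left (hexp_le y) (hw_nn y)
        _ = ‖x - y‖ ^ (-c) * w y + w y := by ring
    have jensen := convexOn_exp.map_integral_le Real.continuous_exp.continuousOn isClosed_univ
      (Eventually.of_forall fun y => mem_univ (φ y)) hφμ hexpφμ
    have hμφ : ∫ y, φ y ∂μ =
        Λ * (1 / (2 * Real.pi * d) * ∫ y in Ω, Real.log (1 / ‖x - y‖) * |u y|) := by
      rw [hconv φ]
      have heq : (fun y => w y * φ y) =
          fun y => (Λ / (2 * Real.pi * d)) * (Real.log (1 / ‖x - y‖) * |u y|) := by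
        funext y
        simp only [hφ_def, hw_def, hc_def]
        field_simp
      rw [heq, integral_const_mul]
      ring
    have hμexp : ∫ y, Real.exp (φ y) ∂μ = G x := by
      rw [hconv]
      have hne : ∀ᵐ y ∂ν, y ≠ x := by
        refine ae_iff.2 ?_
        have hset : {y : EuclideanSpace ℝ (Fin 2) | ¬ y ≠ x} = {x} := by ext y; simp
        rw [hset, hν_def, Measure.restrict_apply (measurableSet_singleton x)]
        exact le_antisymm (le_trans (measure_mono inter_subset_left) (by simp)) (zero_le)
      refine integral_congr_ae ?_
      filter_upwards [hne] with y hy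
      rw [hexp_eq y (sub_ne_zero.2 (Ne.symm hy))]
      ring
    calc Real.exp (Λ * v x)
        ≤ Real.exp (Λ * (1 / (2 * Real.pi * d) *
            (∫ y in Ω, Real.log (1 / ‖x - y‖) * |u y|) + K * m)) :=
          Real.exp_le_exp.2 (mul_le_mul_of_nonneg_left (hv x hxΩ) hΛ.le)
      _ = Real.exp (Λ * K * m) * Real.exp (∫ y, φ y ∂μ) := by
          rw [hμφ, ← Real.exp_add]
          congr 1
          ring
      _ ≤ Real.exp (Λ * K * m) * ∫ y, Real.exp (φ y) ∂μ :=
          mul_le_mul_of_nonneg_left jensen (Real.exp_nonneg _)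
      _ = Real.exp (Λ * K * m) * G x := by rw [hμexp]
  -- integrability of G
  have hG_nn : ∀ x, 0 ≤ G x := fun x =>
    integral_nonneg fun y => mul_nonneg (rpow_nonneg (norm_nonneg _) _) (hw_nn y)
  have hG_int : Integrable G ν := by
    refine ⟨hF_asm.integral_prod_right', ?_⟩
    rw [hasFiniteIntegral_iff_ofReal (Eventually.of_forall hG_nn)]
    have hle : ∫⁻ x, ENNReal.ofReal (G x) ∂ν ≤
        ∫⁻ x, ∫⁻ y, ENNReal.ofReal (‖x - y‖ ^ (-c) * w y) ∂ν ∂ν := by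
      refine lintegral_mono fun x => ?_
      by_cases hint : Integrable (fun y => ‖x - y‖ ^ (-c) * w y) ν
      · rw [hG_def]
        rw [ofReal_integral_eq_lintegral_ofReal hint (Eventually.of_forall fun y =>
          mul_nonneg (rpow_nonneg (norm_nonneg _) _) (hw_nn y))]
      · have : G x = 0 := integral_undef hint
        rw [this]
        simp
    refine lt_of_le_of_lt hle ?_
    rw [← lintegral_prod _ hFm]
    exact hprod_fin
  -- comparison of integrals
  have step1 : ∫ x in Ω, Real.exp (Λ * v x) ≤ ∫ x in Ω, Real.exp (Λ * K * m) * G x :=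
    integral_mono_of_nonneg (Eventually.of_forall fun x => Real.exp_nonneg _)
      (hG_int.const_mul _) key
  refine le_trans step1 ?_
  rw [integral_const_mul]
  refine le_of_eq ?_
  congr 1
  -- Fubini
  have hFint : Integrable
      (fun p : EuclideanSpace ℝ (Fin 2) × EuclideanSpace ℝ (Fin 2) =>
        ‖p.1 - p.2‖ ^ (-c) * w p.2) (ν.prod ν) := by
    refine ⟨hF_asm, ?_⟩
    have hnn : 0 ≤ᵐ[ν.prod ν]
        fun p : EuclideanSpace ℝ (Fin 2) × EuclideanSpace ℝ (Fin 2) => ‖p.1 - p.2‖ ^ (-c) * w p.2 :=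
      Eventually.of_forall fun p => mul_nonneg (rpow_nonneg (norm_nonneg _) _) (hw_nn p.2)
    rw [hasFiniteIntegral_iff_ofReal hnn]
    exact hprod_fin
  have hswap := integral_integral_swap
    (f := fun x y : EuclideanSpace ℝ (Fin 2) => ‖x - y‖ ^ (-c) * w y) hFint
  calc ∫ x in Ω, G x = ∫ y, ∫ x, ‖x - y‖ ^ (-c) * w y ∂ν ∂ν := hswap
    _ = ∫ y in Ω, (∫ x in Ω, ‖x - y‖ ^ (-c)) * w y := by
        refine integral_congr_ae (Eventually.of_forall fun y => ?_)
        beta_reduce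
        rw [integral_mul_const]
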